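/- Let h be a Leibniz algebra. The subspace Ξ(h) = {(D^L,D^R) ∈ Der^L(h)⊕Der^R(h) | D^Lα + D^Rα ∈ Z(h) for all α, and D^R vanishes on Z(h)} is a sub-Leibniz algebra of the semidirect product (Der^L(h)⊕Der^R(h), [·,·]_s), and moreover it is a right ideal. -/
import Mathlib


variable {K : Type*} [Field K] {h : Type*} [AddCommGroup h] [Module K h]

/-- Left derivation. -/
def IsLeftDer (B : h →ₗ[K] h →ₗ[K] h) (D : Module.End K h) : Prop :=
  ∀ a b : h, D (B a b) = B (D a) b + B a (D b)

/-- Right derivation. -/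
def IsRightDer (B : h →ₗ[K] h →ₗ[K] h) (D : Module.End K h) : Prop :=
  ∀ a b : h, D (B a b) = B a (D b) - B b (D a)

/-- Membership in `Ξ(h)`: `(D^L, D^R)` with `D^L` a left derivation, `D^R` a
right derivation, `D^L α + D^R α ∈ Z(h)` for all `α`, and `D^R Z(h) = 0`,
where `Z(h)` is the left center. -/
def InXi (B : h →ₗ[K] h →ₗ[K] h) (D : Module.End K h × Module.End K h) : Prop :=
  IsLeftDer B D.1 ∧ IsRightDer B D.2 ∧
  (∀ α β : h, B (D.1 α + D.2 α) β = 0) ∧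
  (∀ α : h, (∀ β : h, B α β = 0) → D.2 α = 0)

lemma bracket_apply (f g : Module.End K h) (a : h) : ⁅f, g⁆ a = f (g a) - g (f a) := by
  simp [Ring.lie_def]

lemma key_lemma (B : h →ₗ[K] h →ₗ[K] h)
    (D E : Module.End K h × Module.End K h)
    (hD1 : IsLeftDer B D.1) (hE : InXi B E) :
    InXi B (⁅D.1, E.1⁆, ⁅D.1, E.2⁆) := by
  obtain ⟨hE1, hE2, hEcen, hEz⟩ := hE
  -- left center is invariant under left derivations
  have hcen_inv : ∀ α : h, (∀ β : h, B α β = 0) → ∀ β : h, B (D.1 α) β = 0 := by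
    intro α hα β
    have := hD1 α β
    rw [hα β, map_zero] at this
    have h2 : B α (D.1 β) = 0 := hα _
    rw [h2, add_zero] at this
    exact this.symm
  refine ⟨?_, ?_, ?_, ?_⟩
  · -- [D1,E1] left derivation
    intro a b
    simp only [bracket_apply]
    rw [hE1 a b, map_add, hD1 (E.1 a) b, hD1 a (E.1 b),
        hD1 a b, map_add, hE1 (D.1 a) b, hE1 a (D.1 b)]
    simp only [map_add, map_sub, LinearMap.add_apply, LinearMap.sub_apply]
    abel
  · -- [D1,E2] right derivation
    intro a b
    simp only [bracket_apply]
    rw [hE2 a b, map_sub, hD1 a (E.2 b), hD1 b (E.2 a),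
        hD1 a b, map_add, hE2 (D.1 a) b, hE2 a (D.1 b)]
    simp only [map_add, map_sub, LinearMap.add_apply, LinearMap.sub_apply]
    abel
  · -- centrality
    intro α β
    have hz : ∀ γ : h, B (D.1 (E.1 α + E.2 α)) γ = 0 := hcen_inv _ (hEcen α)
    have hz2 : ∀ γ : h, B (E.1 (D.1 α) + E.2 (D.1 α)) γ = 0 := hEcen (D.1 α)
    have : (⁅D.1, E.1⁆ α + ⁅D.1, E.2⁆ α)
        = D.1 (E.1 α + E.2 α) - (E.1 (D.1 α) + E.2 (D.1 α)) := by
      simp only [bracket_apply, map_add]; abel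
    rw [this, map_sub, LinearMap.sub_apply, hz, hz2, sub_zero]
  · -- vanishing on left center
    intro α hα
    have hDα : ∀ β : h, B (D.1 α) β = 0 := hcen_inv α hα
    rw [bracket_apply, hEz α hα, map_zero, hEz (D.1 α) hDα, zero_sub, neg_zero]

/-- Proposition 3.11 and Corollary 3.12: `Ξ(h)` is a sub-Leibniz algebra of
`(Der^L(h) ⊕ Der^R(h), [·,·]_s)`, and moreover a right ideal: bracketing any
pair of (left, right) derivations with an element of `Ξ(h)` on the right
stays in `Ξ(h)`. -/
theorem Xi_subalgebra_and_right_ideal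
    (B : h →ₗ[K] h →ₗ[K] h)
    (hleib : ∀ a b c : h, B a (B b c) = B (B a b) c + B b (B a c)) :
    -- sub-Leibniz algebra
    (∀ D E : Module.End K h × Module.End K h, InXi B D → InXi B E →
      InXi B (⁅D.1, E.1⁆, ⁅D.1, E.2⁆)) ∧
    -- right ideal in Der^L(h) ⊕ Der^R(h)
    (∀ D E : Module.End K h × Module.End K h,
      IsLeftDer B D.1 → IsRightDer B D.2 → InXi B E →
      InXi B (⁅D.1, E.1⁆, ⁅D.1, E.2⁆)) := by
  exact ⟨fun D E hD hE => key_lemma B D E hD.1 hE,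
    fun D E hD1 _ hE => key_lemma B D E hD1 hE⟩
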